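/- Let G be a graph on exactly 6n vertices with a partition (A, B, C, D) of V(G) such that |A| = |B| = n, |C| = |D| = 2n, no vertex of A is adjacent to any vertex of D, and no vertex of B is adjacent to any vertex of C. If F ⊆ E(G) has |F| ≤ n and the quotient graph G/F (obtained by contracting each connected component of the subgraph spanned by F to a single vertex) is a clique, then F is a matching of size exactly n in which every edge has one endpoint in A and the other endpoint in B. -/

import Mathlib

open SimpleGraph

/-- Contraction of a set of edges `F` in `G`: the vertices are the connected components of
the graph spanned by `F`, two components adjacent iff some pair of their vertices is
adjacent in `G`. -/
def contract {V : Type*} (G : SimpleGraph V) (F : Set (Sym2 V)) :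
    SimpleGraph (SimpleGraph.fromEdgeSet F).ConnectedComponent where
  Adj c d := c ≠ d ∧ ∃ u v : V, (SimpleGraph.fromEdgeSet F).connectedComponentMk u = c ∧
      (SimpleGraph.fromEdgeSet F).connectedComponentMk v = d ∧ G.Adj u v
  symm := by
    constructor
    rintro c d ⟨hne, u, v, hu, hv, h⟩
    exact ⟨hne.symm, v, u, hv, hu, h.symm⟩
  loopless := ⟨fun c h => h.1 rfl⟩

/-- `G/F` is a complete graph. -/
def IsCliqueGraph {V : Type*} (G : SimpleGraph V) : Prop :=
  ∀ u v : V, u ≠ v → G.Adj u v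

/-- A set of edges is a matching if no two distinct edges share an endpoint. -/
def IsMatchingSet {V : Type*} (M : Set (Sym2 V)) : Prop :=
  ∀ e ∈ M, ∀ f ∈ M, e ≠ f → ∀ v : V, v ∈ e → v ∉ f

private lemma sym2_exists_rep {V : Type*} (e : Sym2 V) : ∃ a b, e = s(a, b) :=
  Sym2.inductionOn e fun a b => ⟨a, b, rfl⟩

private lemma count_aux {V : Type*} [Fintype V] (F : Set (Sym2 V)) (s : Finset V)
    (g : V → Sym2 V) (hg : ∀ v ∈ s, g v ∈ F ∧ v ∈ g v) : s.card ≤ 2 * F.ncard := by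
  classical
  have hFfin : F.Finite := Set.toFinite F
  rw [Set.ncard_eq_toFinset_card F hFfin]
  refine Finset.card_le_mul_card_image_of_maps_to (f := g) (t := hFfin.toFinset)
    (fun v hv => hFfin.mem_toFinset.mpr (hg v hv).1) 2 ?_
  intro e _
  obtain ⟨a, b, rfl⟩ := sym2_exists_rep e
  have hsub : s.filter (fun v => g v = s(a, b)) ⊆ {a, b} := by
    intro v hv
    rw [Finset.mem_filter] at hv
    have h2 := (hg v hv.1).2
    rw [hv.2] at h2
    rcases Sym2.mem_iff.mp h2 with h | h <;> simp [h]
  refine (Finset.card_le_card hsub).trans ?_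
  refine (Finset.card_insert_le _ _).trans (by simp)

theorem stmt_2 {V : Type*} [Fintype V] (n : ℕ) (G : SimpleGraph V)
    (A B C D : Set V)
    (hunion : A ∪ B ∪ C ∪ D = Set.univ)
    (hAB : Disjoint A B) (hAC : Disjoint A C) (hAD : Disjoint A D)
    (hBC : Disjoint B C) (hBD : Disjoint B D) (hCD : Disjoint C D)
    (hV : Fintype.card V = 6 * n)
    (hA : A.ncard = n) (hB : B.ncard = n) (hC : C.ncard = 2 * n) (hD : D.ncard = 2 * n)
    (hADedge : ∀ a ∈ A, ∀ d ∈ D, ¬ G.Adj a d)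
    (hBCedge : ∀ b ∈ B, ∀ c ∈ C, ¬ G.Adj b c)
    (F : Set (Sym2 V)) (hFE : F ⊆ G.edgeSet) (hFcard : F.ncard ≤ n)
    (hclique : IsCliqueGraph (contract G F)) :
    F.ncard = n ∧ IsMatchingSet F ∧
      ∀ e ∈ F, ∃ a ∈ A, ∃ b ∈ B, e = s(a, b) := by
  classical
  have hFfin : F.Finite := Set.toFinite F
  set H := SimpleGraph.fromEdgeSet F with hH
  set Cov : Set V := {v | ∃ e ∈ F, v ∈ e} with hCovdef
  -- a vertex reachable (in H) to a different vertex is covered by F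
  have reach_cov : ∀ x y : V, H.Reachable x y → x ≠ y → x ∈ Cov := by
    intro x y hr hxy
    obtain ⟨p⟩ := hr
    cases p with
    | nil => exact absurd rfl hxy
    | @cons _ w _ h q =>
        rw [hH, SimpleGraph.fromEdgeSet_adj] at h
        exact ⟨s(x, w), h.1, Sym2.mem_mk_left x w⟩
  -- a choice of covering edge
  have hgex : ∀ v : V, ∃ e : Sym2 V, v ∈ Cov → e ∈ F ∧ v ∈ e := by
    intro v
    by_cases hv : v ∈ Cov
    · obtain ⟨e, he, hve⟩ := hv
      exact ⟨e, fun _ => ⟨he, hve⟩⟩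
    · exact ⟨s(v, v), fun h => absurd h hv⟩
  choose g hg using hgex
  -- key lemma: a vertex with a big "non-neighbor" set must be covered
  have key : ∀ (a : V) (Y : Set V), 0 < n → Y.ncard = 2 * n →
      (∀ y ∈ Y, ¬ G.Adj a y) → a ∉ Y → a ∈ Cov := by
    intro a Y hn hYcard hforb haY
    by_contra ha
    have huncov : ∀ u : V, H.Reachable a u → u = a := by
      intro u hr
      by_contra hu
      exact ha (reach_cov a u hr (fun h => hu h.symm))
    have hYreach : ∀ d ∈ Y, ∃ v : V, v ∉ Y ∧ H.Reachable d v ∧ v ≠ d := by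
      intro d hd
      have hne : H.connectedComponentMk a ≠ H.connectedComponentMk d := by
        intro h
        have := huncov d ((SimpleGraph.ConnectedComponent.eq).mp h)
        subst this
        exact haY hd
      obtain ⟨-, u, v, hu, hv, hadj⟩ := hclique _ _ hne
      have hu' : u = a := huncov u ((SimpleGraph.ConnectedComponent.eq).mp hu).symm
      subst hu'
      have hvY : v ∉ Y := fun hvY => hforb v hvY hadj
      have hdv : H.Reachable d v := ((SimpleGraph.ConnectedComponent.eq).mp hv).symm
      exact ⟨v, hvY, hdv, fun h => hvY (h ▸ hd)⟩
    have hYcov : ∀ d ∈ Y, d ∈ Cov := by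
      intro d hd
      obtain ⟨v, hvY, hr, hvd⟩ := hYreach d hd
      exact reach_cov d v hr (fun h => hvY (h ▸ hd))
    obtain ⟨d0, hd0⟩ : Y.Nonempty := Set.nonempty_of_ncard_ne_zero (by omega)
    obtain ⟨v0, hv0Y, hr0, hv0d0⟩ := hYreach d0 hd0
    have hv0cov : v0 ∈ Cov := reach_cov v0 d0 hr0.symm hv0d0
    have hYfin : Y.Finite := Set.toFinite Y
    have hsall : ∀ v ∈ insert v0 hYfin.toFinset, g v ∈ F ∧ v ∈ g v := by
      intro v hv
      rcases Finset.mem_insert.mp hv with rfl | hv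
      · exact hg v hv0cov
      · exact hg v (hYcov v (hYfin.mem_toFinset.mp hv))
    have hcount := count_aux F (insert v0 hYfin.toFinset) g hsall
    have hcard : (insert v0 hYfin.toFinset).card = 2 * n + 1 := by
      rw [Finset.card_insert_of_notMem (fun h => hv0Y (hYfin.mem_toFinset.mp h))]
      rw [← Set.ncard_eq_toFinset_card Y hYfin, hYcard]
    omega
  rcases Nat.eq_zero_or_pos n with hn0 | hnpos
  · -- trivial case n = 0
    subst hn0
    have hF0 : F = ∅ := by
      have h0 : F.ncard = 0 := Nat.le_zero.mp hFcard
      exact (Set.ncard_eq_zero hFfin).mp h0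
    subst hF0
    refine ⟨by simp, ?_, ?_⟩
    · intro e he; simp at he
    · intro e he; simp at he
  -- main case
  have hACov : ∀ a ∈ A, a ∈ Cov := fun a ha =>
    key a D hnpos hD (hADedge a ha) (Set.disjoint_left.mp hAD ha)
  have hBCov : ∀ b ∈ B, b ∈ Cov := fun b hb =>
    key b C hnpos hC (hBCedge b hb) (Set.disjoint_left.mp hBC hb)
  have hABfin : (A ∪ B).Finite := Set.toFinite _
  set sAB := hABfin.toFinset with hsABdef
  have hcardAB : sAB.card = 2 * n := by
    rw [hsABdef, ← Set.ncard_eq_toFinset_card (A ∪ B) hABfin,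
      Set.ncard_union_eq hAB (Set.toFinite A) (Set.toFinite B), hA, hB]
    omega
  have hABCov : ∀ v ∈ sAB, v ∈ Cov := by
    intro v hv
    rcases hABfin.mem_toFinset.mp hv with h | h
    · exact hACov v h
    · exact hBCov v h
  set t := hFfin.toFinset with htdef
  have htcard : t.card = F.ncard := (Set.ncard_eq_toFinset_card F hFfin).symm
  have hmaps : ∀ v ∈ sAB, g v ∈ t :=
    fun v hv => hFfin.mem_toFinset.mpr (hg v (hABCov v hv)).1
  have hsum : sAB.card = ∑ e ∈ t, (sAB.filter (fun v => g v = e)).card :=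
    Finset.card_eq_sum_card_fiberwise hmaps
  have hfib2 : ∀ e ∈ t, (sAB.filter (fun v => g v = e)).card ≤ 2 := by
    intro e _
    obtain ⟨a, b, rfl⟩ := sym2_exists_rep e
    have hsub : sAB.filter (fun v => g v = s(a, b)) ⊆ {a, b} := by
      intro v hv
      rw [Finset.mem_filter] at hv
      have h2 := (hg v (hABCov v hv.1)).2
      rw [hv.2] at h2
      rcases Sym2.mem_iff.mp h2 with h | h <;> simp [h]
    exact (Finset.card_le_card hsub).trans
      ((Finset.card_insert_le _ _).trans (by simp))
  have hsumle : ∑ e ∈ t, (sAB.filter (fun v => g v = e)).card ≤ 2 * t.card := by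
    calc ∑ e ∈ t, (sAB.filter (fun v => g v = e)).card ≤ ∑ _e ∈ t, 2 :=
          Finset.sum_le_sum hfib2
      _ = 2 * t.card := by rw [Finset.sum_const, smul_eq_mul, mul_comm]
  have hFn : F.ncard = n := by omega
  have hfibeq : ∀ e ∈ t, (sAB.filter (fun v => g v = e)).card = 2 := by
    by_contra h
    push_neg at h
    obtain ⟨e, he, hne⟩ := h
    have hlt : ∑ e ∈ t, (sAB.filter (fun v => g v = e)).card < ∑ _e ∈ t, 2 :=
      Finset.sum_lt_sum hfib2 ⟨e, he, lt_of_le_of_ne (hfib2 e he) hne⟩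
    rw [Finset.sum_const, smul_eq_mul, mul_comm] at hlt
    omega
  -- every endpoint of an edge of F lies in A ∪ B, and g picks that edge
  have hkey : ∀ e ∈ F, ∀ v, v ∈ e → v ∈ A ∪ B ∧ g v = e := by
    intro e heF
    obtain ⟨x, y, rfl⟩ := sym2_exists_rep e
    have hxy : x ≠ y := (G.mem_edgeSet.mp (hFE heF)).ne
    have heT : s(x, y) ∈ t := hFfin.mem_toFinset.mpr heF
    have hsub : sAB.filter (fun v => g v = s(x, y)) ⊆ {x, y} := by
      intro v hv
      rw [Finset.mem_filter] at hv
      have h2 := (hg v (hABCov v hv.1)).2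
      rw [hv.2] at h2
      rcases Sym2.mem_iff.mp h2 with h | h <;> simp [h]
    have hfibfull : sAB.filter (fun v => g v = s(x, y)) = {x, y} :=
      Finset.eq_of_subset_of_card_le hsub
        (by rw [hfibeq _ heT, Finset.card_pair hxy])
    intro v hv
    have hv' : v ∈ sAB.filter (fun v => g v = s(x, y)) := by
      rw [hfibfull]
      rcases Sym2.mem_iff.mp hv with h | h <;> simp [h]
    rw [Finset.mem_filter] at hv'
    exact ⟨hABfin.mem_toFinset.mp hv'.1, hv'.2⟩
  have hM : IsMatchingSet F := by
    intro e he f hf hef v hve hvf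
    exact hef (((hkey e he v hve).2).symm.trans ((hkey f hf v hvf).2))
  refine ⟨hFn, hM, ?_⟩
  intro e he
  obtain ⟨x, y, rfl⟩ := sym2_exists_rep e
  have hadjxy : G.Adj x y := G.mem_edgeSet.mp (hFE he)
  have hxy : x ≠ y := hadjxy.ne
  have hx : x ∈ A ∪ B := (hkey _ he x (Sym2.mem_mk_left x y)).1
  have hy : y ∈ A ∪ B := (hkey _ he y (Sym2.mem_mk_right x y)).1
  -- edges of F incident to {x, y} stay within {x, y}
  have edge_unique : ∀ z w : V, s(z, w) ∈ F → (z = x ∨ z = y) → (w = x ∨ w = y) := by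
    intro z w hzw hz
    have hzxy : z ∈ s(x, y) := by
      rcases hz with rfl | rfl
      · exact Sym2.mem_mk_left z y
      · exact Sym2.mem_mk_right x z
    have heq : s(z, w) = s(x, y) := by
      by_contra hne
      exact hM _ hzw _ he hne z (Sym2.mem_mk_left z w) hzxy
    rcases Sym2.eq_iff.mp heq with ⟨_, rfl⟩ | ⟨_, rfl⟩
    · exact Or.inr rfl
    · exact Or.inl rfl
  have comp_mem : ∀ (u w : V), H.Walk u w → (u = x ∨ u = y) → (w = x ∨ w = y) := by
    intro u w p
    induction p with
    | nil => exact id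
    | @cons a b c hadj p ih =>
        intro hu
        rw [hH, SimpleGraph.fromEdgeSet_adj] at hadj
        exact ih (edge_unique a b hadj.1 hu)
  have reach_xy : ∀ u : V, H.Reachable x u → (u = x ∨ u = y) :=
    fun u hr => hr.elim fun p => comp_mem x u p (Or.inl rfl)
  have reach_xy' : ∀ u : V, H.Reachable y u → (u = x ∨ u = y) :=
    fun u hr => hr.elim fun p => comp_mem y u p (Or.inr rfl)
  -- uncovered vertices outside A ∪ B
  have not_cov : ∀ v : V, v ∉ A ∪ B → v ∉ Cov := by
    intro v hv hvc
    obtain ⟨e', he', hve'⟩ := hvc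
    exact hv (hkey e' he' v hve').1
  -- generic contradiction if both endpoints in X, with Y the forbidden side
  have both_bad : ∀ (X Y : Set V), (∀ a ∈ X, ∀ d ∈ Y, ¬ G.Adj a d) →
      Y.ncard = 2 * n → Disjoint X Y → (Disjoint A Y ∧ Disjoint B Y) →
      x ∈ X → y ∈ X → False := by
    intro X Y hforb hYcard hXY hABY hxX hyX
    obtain ⟨d, hd⟩ : Y.Nonempty := Set.nonempty_of_ncard_ne_zero (by omega)
    have hdnc : d ∉ Cov := not_cov d (by
      rintro (h | h)
      · exact Set.disjoint_left.mp hABY.1 h hd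
      · exact Set.disjoint_left.mp hABY.2 h hd)
    have hne : H.connectedComponentMk x ≠ H.connectedComponentMk d := by
      intro h
      have hr := (SimpleGraph.ConnectedComponent.eq).mp h
      rcases reach_xy d hr with rfl | rfl
      · exact Set.disjoint_left.mp hXY hxX hd
      · exact Set.disjoint_left.mp hXY hyX hd
    obtain ⟨-, u, v, hu, hv, hadj⟩ := hclique _ _ hne
    have hu' : u = x ∨ u = y :=
      reach_xy u ((SimpleGraph.ConnectedComponent.eq).mp hu).symm
    have hv' : v = d := by
      by_contra hvd
      have hr : H.Reachable v d := (SimpleGraph.ConnectedComponent.eq).mp hv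
      exact hdnc (reach_cov d v hr.symm (fun h => hvd h.symm))
    rw [hv'] at hadj
    have huX : u ∈ X := by rcases hu' with rfl | rfl <;> assumption
    exact hforb u huX d hd hadj
  rcases hx with hxA | hxB <;> rcases hy with hyA | hyB
  · exact (both_bad A D hADedge hD hAD ⟨hAD, hBD⟩ hxA hyA).elim
  · exact ⟨x, hxA, y, hyB, rfl⟩
  · exact ⟨y, hyA, x, hxB, Sym2.eq_swap⟩
  · exact (both_bad B C hBCedge hC hBC ⟨hAC, hBC⟩ hxB hyB).elim
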